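/- In ℚ[[q]] the identity f(q) = 1 + ((−q;q)_∞)^{−1} · ∑_{n=1}^∞ (−1)^{n−1} q^n · (−q^{n+1};q)_∞ holds, where f(q) = ∑_{n=0}^∞ q^{n²} · (∏_{j=1}^{n}(1+q^j))^{−2}. -/

import Mathlib

open PowerSeries

/-- The coefficientwise sum of a family of formal power series; it agrees with
the sum of the family whenever `coeff N (f n) = 0` for `n > N` (so that the
partial sums converge coefficientwise in the `q`-adic topology). -/
noncomputable def seriesSum {R : Type*} [CommRing R] (f : ℕ → PowerSeries R) : PowerSeries R :=
  PowerSeries.mk fun N => ∑ n ∈ Finset.range (N + 1), PowerSeries.coeff (R := R) N (f n)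

/-- The coefficientwise infinite product of a family of formal power series;
it agrees with the product of the family whenever each factor `f k` is
`1 + (terms of order > k)` (so that the partial products converge
coefficientwise in the `q`-adic topology). -/
noncomputable def seriesProd {R : Type*} [CommRing R] (f : ℕ → PowerSeries R) : PowerSeries R :=
  PowerSeries.mk fun N => PowerSeries.coeff (R := R) N (∏ k ∈ Finset.range (N + 1), f k)

/-- Ramanujan's third order mock theta function `f(q)`. -/
noncomputable def mockF : PowerSeries ℚ :=
  seriesSum fun n =>
    (X : PowerSeries ℚ) ^ (n ^ 2)
      * Ring.inverse (∏ j ∈ Finset.range n, (1 + X ^ (j + 1))) ^ 2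

open Finset

abbrev PS : Type := PowerSeries ℚ

/-- `(-q;q)_n`. -/
noncomputable def Qp (n : ℕ) : PS := ∏ j ∈ Finset.range n, (1 + X ^ (j + 1))
/-- `(-q^(K+1);q)_n`. -/
noncomputable def Tq (K n : ℕ) : PS := ∏ j ∈ Finset.range n, (1 + X ^ (K + 1 + j))
/-- `∑ q^(n²+Kn)/((-q;q)_n (-q^(K+1);q)_n)`. -/
noncomputable def CC (K : ℕ) : PS :=
  seriesSum fun n => X ^ (n*n + K*n) * Ring.inverse (Qp n * Tq K n)
/-- `∑ (-1)^n q^((K+1)n)/(-q;q)_n`. -/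
noncomputable def FF (K : ℕ) : PS :=
  seriesSum fun n => (-1)^n * (X ^ ((K+1)*n) * Ring.inverse (Qp n))

lemma Qp_succ (n : ℕ) : Qp (n+1) = Qp n * (1 + X ^ (n+1)) := Finset.prod_range_succ _ _

lemma Tq_succ (K n : ℕ) : Tq K (n+1) = Tq K n * (1 + X ^ (K+1+n)) := Finset.prod_range_succ _ _

lemma Tq_succ' (K n : ℕ) : Tq K (n+1) = (1 + X ^ (K+1)) * Tq (K+1) n := by
  have h : Tq (K+1) n = ∏ j ∈ Finset.range n, (1 + X^(K+1+(j+1))) :=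
    Finset.prod_congr rfl fun j _ => by rw [show K+1+1+j = K+1+(j+1) from by omega]
  have h2 : Tq K (n+1)
      = (∏ j ∈ Finset.range n, (1 + X^(K+1+(j+1)))) * (1 + X^(K+1+0)) :=
    Finset.prod_range_succ' _ _
  rw [h2, add_zero, ← h, mul_comm]

lemma Tq_zero (n : ℕ) : Tq 0 n = Qp n :=
  Finset.prod_congr rfl fun j _ => by rw [show 0+1+j = j+1 from by omega]

lemma isUnit_cc_one {f : PS} (h : constantCoeff f = 1) : IsUnit f :=
  IsUnit.of_mul_eq_one _ (f.mul_invOfUnit 1 (by simp [h]))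

lemma isUnit_Qp (n : ℕ) : IsUnit (Qp n) := by
  refine isUnit_cc_one ?_
  rw [Qp, map_prod]
  exact Finset.prod_eq_one fun j _ => by simp

lemma isUnit_Tq (K n : ℕ) : IsUnit (Tq K n) := by
  refine isUnit_cc_one ?_
  rw [Tq, map_prod]
  refine Finset.prod_eq_one fun j _ => ?_
  simp [zero_pow (show K+1+j ≠ 0 by omega)]

lemma le_aux (K n : ℕ) : n ≤ n*n + K*n := by
  rcases Nat.eq_zero_or_pos n with h|h
  · simp [h]
  · calc n = 1*n := (one_mul n).symm
      _ ≤ (n+K)*n := Nat.mul_le_mul_right n (by omega)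
      _ = n*n+K*n := by ring

lemma dvd_cc (K n : ℕ) : (X:PS)^n ∣ X ^ (n*n+K*n) * Ring.inverse (Qp n * Tq K n) :=
  dvd_mul_of_dvd_left (pow_dvd_pow X (le_aux K n)) _

lemma dvd_ff (K n : ℕ) : (X:PS)^n ∣ (-1)^n * (X ^ ((K+1)*n) * Ring.inverse (Qp n)) :=
  Dvd.dvd.mul_left
    (dvd_mul_of_dvd_left (pow_dvd_pow X (Nat.le_mul_of_pos_left n (Nat.succ_pos K))) _) _

/-! ### Generic lemmas about `seriesSum` -/

lemma coeff_seriesSum (f : ℕ → PS) (N : ℕ) :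
    coeff N (seriesSum f) = ∑ n ∈ Finset.range (N+1), coeff N (f n) :=
  coeff_mk _ _

lemma coeff_seriesSum_ext (f : ℕ → PS) (h : ∀ n, (X:PS)^n ∣ f n) {N M : ℕ} (hNM : N < M) :
    coeff N (seriesSum f) = ∑ n ∈ Finset.range M, coeff N (f n) := by
  rw [coeff_seriesSum]
  refine Finset.sum_subset (by rw [Finset.range_subset_range]; omega) ?_
  intro x hx hnx
  rw [Finset.mem_range] at hx hnx
  exact X_pow_dvd_iff.mp (h x) N (by omega)

lemma mul_seriesSum (G : PS) (f : ℕ → PS) (h : ∀ n, (X:PS)^n ∣ f n) :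
    G * seriesSum f = seriesSum (fun n => G * f n) := by
  ext N
  rw [coeff_seriesSum, coeff_mul]
  have h1 : ∀ p ∈ Finset.HasAntidiagonal.antidiagonal N,
      coeff p.1 G * coeff p.2 (seriesSum f)
        = ∑ n ∈ Finset.range (N+1), coeff p.1 G * coeff p.2 (f n) := by
    intro p hp
    have hp2 : p.2 ≤ N := by
      have := Finset.HasAntidiagonal.mem_antidiagonal.mp hp; omega
    rw [coeff_seriesSum_ext f h (show p.2 < N+1 by omega), Finset.mul_sum]
  rw [Finset.sum_congr rfl h1, Finset.sum_comm]
  exact Finset.sum_congr rfl fun n _ => (coeff_mul N G (f n)).symm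

lemma seriesSum_add (f g : ℕ → PS) :
    seriesSum f + seriesSum g = seriesSum (fun n => f n + g n) := by
  ext N
  rw [map_add, coeff_seriesSum, coeff_seriesSum, coeff_seriesSum, ← Finset.sum_add_distrib]
  exact Finset.sum_congr rfl fun n _ => (map_add _ _ _).symm

lemma seriesSum_telescope (f v : ℕ → PS) (hfv : ∀ n, f n = v n - v (n+1))
    (hv : ∀ n, (X:PS)^n ∣ v n) :
    seriesSum f = v 0 := by
  ext N
  rw [coeff_seriesSum]
  have h1 : ∑ n ∈ Finset.range (N+1), coeff N (f n)
      = coeff N (∑ n ∈ Finset.range (N+1), (v n - v (n+1))) := by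
    rw [map_sum]
    exact Finset.sum_congr rfl fun n _ => by rw [hfv]
  rw [h1, Finset.sum_range_sub', map_sub,
    show coeff N (v (N+1)) = 0 from X_pow_dvd_iff.mp (hv (N+1)) N (by omega), sub_zero]

/-! ### Unit-cancellation helper -/

lemma frac_eq {A B U V : PS} (hU : IsUnit U) (hV : IsUnit V) (h : A * V = B * U) :
    A * Ring.inverse U = B * Ring.inverse V := by
  have hU1 : U * Ring.inverse U = 1 := Ring.mul_inverse_cancel U hU
  have hV1 : V * Ring.inverse V = 1 := Ring.mul_inverse_cancel V hV
  calc A * Ring.inverse U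
      = A * Ring.inverse U * (V * Ring.inverse V) := by rw [hV1, mul_one]
    _ = A * V * (Ring.inverse U * Ring.inverse V) := by ring
    _ = B * U * (Ring.inverse U * Ring.inverse V) := by rw [h]
    _ = B * Ring.inverse V * (U * Ring.inverse U) := by ring
    _ = B * Ring.inverse V := by rw [hU1, mul_one]

/-! ### The two telescoping steps -/

lemma tk_step (K n : ℕ) :
    (1+X^(K+1)) * (X^(n*n+K*n) * Ring.inverse (Qp n * Tq K n))
      + X^(n*n+(K+1)*n) * Ring.inverse (Qp n * Tq (K+1) n)
    = (1+X^(K+1)) * (X^(n*n+K*n) * ((1+X^n) * Ring.inverse (Qp n * Tq K n)))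
      - (1+X^(K+1)) * (X^((n+1)*(n+1)+K*(n+1)) * ((1+X^(n+1)) * Ring.inverse (Qp (n+1) * Tq K (n+1)))) := by
  have hu1 : IsUnit (Qp n * Tq K n) := (isUnit_Qp n).mul (isUnit_Tq K n)
  have hu2 : IsUnit (Qp (n+1) * Tq K (n+1)) := (isUnit_Qp _).mul (isUnit_Tq K _)
  have hu3 : IsUnit (Qp n * Tq (K+1) n) := (isUnit_Qp n).mul (isUnit_Tq (K+1) n)
  have e1 : ((1+X^(K+1)) * X^(n*n+K*n)) * Ring.inverse (Qp n * Tq K n)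
      = ((1+X^(K+1)) * X^(n*n+K*n) * ((1+X^(n+1)) * (1+X^(K+1+n))))
          * Ring.inverse (Qp (n+1) * Tq K (n+1)) :=
    frac_eq hu1 hu2 (by rw [Qp_succ, Tq_succ]; ring)
  have e2 : (X^(n*n+(K+1)*n)) * Ring.inverse (Qp n * Tq (K+1) n)
      = (X^(n*n+(K+1)*n) * ((1+X^(n+1)) * (1+X^(K+1))))
          * Ring.inverse (Qp (n+1) * Tq K (n+1)) :=
    frac_eq hu3 hu2 (by rw [Qp_succ, Tq_succ']; ring)
  have e3 : ((1+X^(K+1)) * (X^(n*n+K*n) * (1+X^n))) * Ring.inverse (Qp n * Tq K n)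
      = ((1+X^(K+1)) * (X^(n*n+K*n) * (1+X^n)) * ((1+X^(n+1)) * (1+X^(K+1+n))))
          * Ring.inverse (Qp (n+1) * Tq K (n+1)) :=
    frac_eq hu1 hu2 (by rw [Qp_succ, Tq_succ]; ring)
  linear_combination e1 + e2 - e3

lemma ff_step (K n : ℕ) :
    (1+X^(K+1)) * ((-1)^n * (X^((K+1)*n) * Ring.inverse (Qp n)))
      + (-1)^n * (X^((K+1+1)*n) * Ring.inverse (Qp n))
    = (-1)^n * (X^((K+1)*n) * ((1+X^n) * Ring.inverse (Qp n)))
      - (-1)^(n+1) * (X^((K+1)*(n+1)) * ((1+X^(n+1)) * Ring.inverse (Qp (n+1)))) := by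
  have hu1 := isUnit_Qp n
  have hu2 := isUnit_Qp (n+1)
  have e1 : ((1+X^(K+1)) * ((-1)^n * X^((K+1)*n))) * Ring.inverse (Qp n)
      = ((1+X^(K+1)) * ((-1)^n * X^((K+1)*n)) * (1+X^(n+1))) * Ring.inverse (Qp (n+1)) :=
    frac_eq hu1 hu2 (by rw [Qp_succ]; ring)
  have e2 : ((-1)^n * X^((K+1+1)*n)) * Ring.inverse (Qp n)
      = ((-1)^n * X^((K+1+1)*n) * (1+X^(n+1))) * Ring.inverse (Qp (n+1)) :=
    frac_eq hu1 hu2 (by rw [Qp_succ]; ring)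
  have e3 : ((-1)^n * (X^((K+1)*n) * (1+X^n))) * Ring.inverse (Qp n)
      = ((-1)^n * (X^((K+1)*n) * (1+X^n)) * (1+X^(n+1))) * Ring.inverse (Qp (n+1)) :=
    frac_eq hu1 hu2 (by rw [Qp_succ]; ring)
  linear_combination e1 + e2 - e3

/-! ### The two chains -/

lemma keyC (K : ℕ) : (1+X^(K+1)) * CC K + CC (K+1) = 2*(1+X^(K+1)) := by
  calc (1+X^(K+1)) * CC K + CC (K+1)
      = seriesSum (fun n => (1+X^(K+1)) * (X^(n*n+K*n) * Ring.inverse (Qp n * Tq K n))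
          + X^(n*n+(K+1)*n) * Ring.inverse (Qp n * Tq (K+1) n)) := by
        rw [CC, CC, mul_seriesSum _ _ (dvd_cc K), seriesSum_add]
    _ = (1+X^(K+1)) * (X^(0*0+K*0) * ((1+X^0) * Ring.inverse (Qp 0 * Tq K 0))) := by
        refine seriesSum_telescope _
          (fun n => (1+X^(K+1)) * (X^(n*n+K*n) * ((1+X^n) * Ring.inverse (Qp n * Tq K n))))
          (tk_step K) (fun n => ?_)
        exact Dvd.dvd.mul_left (dvd_mul_of_dvd_left (pow_dvd_pow X (le_aux K n)) _) _
    _ = 2*(1+X^(K+1)) := by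
        simp [Qp, Tq, Ring.inverse_one]
        ring

lemma keyF (K : ℕ) : (1+X^(K+1)) * FF K + FF (K+1) = 2 := by
  calc (1+X^(K+1)) * FF K + FF (K+1)
      = seriesSum (fun n => (1+X^(K+1)) * ((-1)^n * (X^((K+1)*n) * Ring.inverse (Qp n)))
          + (-1)^n * (X^((K+1+1)*n) * Ring.inverse (Qp n))) := by
        rw [FF, FF, mul_seriesSum _ _ (dvd_ff K), seriesSum_add]
    _ = (-1)^0 * (X^((K+1)*0) * ((1+X^0) * Ring.inverse (Qp 0))) := by
        refine seriesSum_telescope _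
          (fun n => (-1)^n * (X^((K+1)*n) * ((1+X^n) * Ring.inverse (Qp n))))
          (ff_step K) (fun n => ?_)
        refine Dvd.dvd.mul_left (dvd_mul_of_dvd_left
          (pow_dvd_pow X (Nat.le_mul_of_pos_left n (Nat.succ_pos K))) _) _
    _ = 2 := by
        simp [Qp, Ring.inverse_one]
        norm_num

/-! ### Low-order coefficients vanish -/

lemma coeff_low (K j : ℕ) (hj : j < K+1) : coeff j (CC K + FF K - 2) = 0 := by
  have hC : coeff j (CC K) = coeff j 1 := by
    rw [CC, coeff_seriesSum, Finset.sum_range_succ']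
    have hz : ∀ i ∈ Finset.range j,
        coeff j (X^((i+1)*(i+1)+K*(i+1)) * Ring.inverse (Qp (i+1) * Tq K (i+1))) = 0 := by
      intro i _
      refine X_pow_dvd_iff.mp (dvd_mul_of_dvd_left dvd_rfl _) j ?_
      have h1 : 1*1 ≤ (i+1)*(i+1) := Nat.mul_le_mul (by omega) (by omega)
      have h2 : K*1 ≤ K*(i+1) := Nat.mul_le_mul (le_refl K) (by omega)
      omega
    rw [Finset.sum_eq_zero hz, zero_add]
    congr 1
    simp [Qp, Tq, Ring.inverse_one]
  have hF : coeff j (FF K) = coeff j 1 := by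
    rw [FF, coeff_seriesSum, Finset.sum_range_succ']
    have hz : ∀ i ∈ Finset.range j,
        coeff j ((-1)^(i+1) * (X^((K+1)*(i+1)) * Ring.inverse (Qp (i+1)))) = 0 := by
      intro i _
      refine X_pow_dvd_iff.mp (Dvd.dvd.mul_left (dvd_mul_of_dvd_left dvd_rfl _) _) j ?_
      have h2 : (K+1)*1 ≤ (K+1)*(i+1) := Nat.mul_le_mul (le_refl (K+1)) (by omega)
      omega
    rw [Finset.sum_eq_zero hz, zero_add]
    congr 1
    simp [Qp, Ring.inverse_one]
  rw [map_sub, map_add, hC, hF, ← map_add, one_add_one_eq_two, sub_self]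

/-! ### The main identity `CC 0 + FF 0 = 2` -/

lemma key_main : CC 0 + FF 0 = 2 := by
  have hrec : ∀ K, CC (K+1) + FF (K+1) - 2 = -((1+X^(K+1)) * (CC K + FF K - 2)) := by
    intro K
    linear_combination keyC K + keyF K
  have hchain : ∀ K, Qp K * (CC 0 + FF 0 - 2) = (-1)^K * (CC K + FF K - 2) := by
    intro K
    induction K with
    | zero => simp [Qp]
    | succ K ih =>
      rw [Qp_succ, show ((-1:PS))^(K+1) = -(-1:PS)^K from by rw [pow_succ]; ring]
      linear_combination (1+X^(K+1)) * ih + ((-1:PS))^K * hrec K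
  have h0 : CC 0 + FF 0 - 2 = 0 := by
    ext N
    have h1 : (X:PS)^(N+1) ∣ (CC (N+1) + FF (N+1) - 2) :=
      X_pow_dvd_iff.mpr (fun m hm => coeff_low (N+1) m (by omega))
    have h3 : (X:PS)^(N+1) ∣ Qp (N+1) * (CC 0 + FF 0 - 2) := by
      rw [hchain (N+1)]
      exact h1.mul_left _
    have h4 := h3.mul_left (Ring.inverse (Qp (N+1)))
    rw [show Ring.inverse (Qp (N+1)) * (Qp (N+1) * (CC 0 + FF 0 - 2))
        = (Ring.inverse (Qp (N+1)) * Qp (N+1)) * (CC 0 + FF 0 - 2) from by ring,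
      Ring.inverse_mul_cancel _ (isUnit_Qp (N+1)), one_mul] at h4
    rw [map_zero]
    exact X_pow_dvd_iff.mp h4 N (by omega)
  linear_combination h0

/-! ### `seriesProd` lemmas -/

lemma coeff_prod_stable (g : ℕ → PS) (hg : ∀ k, (X:PS)^(k+1) ∣ (g k - 1)) (N : ℕ) :
    ∀ M, N < M → coeff N (∏ k ∈ Finset.range M, g k) = coeff N (∏ k ∈ Finset.range (N+1), g k) := by
  intro M
  induction M with
  | zero => omega
  | succ M ih =>
    intro hM
    rcases Nat.lt_or_ge N M with h|h
    · rw [Finset.prod_range_succ,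
        show (∏ k ∈ Finset.range M, g k) * g M
          = (∏ k ∈ Finset.range M, g k) + (∏ k ∈ Finset.range M, g k) * (g M - 1) from by ring,
        map_add,
        show coeff N ((∏ k ∈ Finset.range M, g k) * (g M - 1)) = 0 from
          X_pow_dvd_iff.mp ((hg M).mul_left _) N (by omega),
        add_zero]
      exact ih h
    · have hMN : M = N := by omega
      subst hMN
      rfl

lemma coeff_seriesProd (g : ℕ → PS) (hg : ∀ k, (X:PS)^(k+1) ∣ (g k - 1)) {N M : ℕ} (h : N < M) :
    coeff N (seriesProd g) = coeff N (∏ k ∈ Finset.range M, g k) := by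
  have h1 : coeff N (seriesProd g) = coeff N (∏ k ∈ Finset.range (N+1), g k) := coeff_mk _ _
  rw [h1, coeff_prod_stable g hg N M h]

lemma hg_shift (t : ℕ) : ∀ j, (X:PS)^(j+1) ∣ ((1 + X^(t+1+j)) - 1 : PS) := by
  intro j
  rw [add_sub_cancel_left]
  exact pow_dvd_pow X (by omega)

lemma hg_base : ∀ k, (X:PS)^(k+1) ∣ ((1 + X^(k+1)) - 1 : PS) := by
  intro k
  rw [add_sub_cancel_left]

lemma seriesProd_shift (t : ℕ) :
    seriesProd (fun k => 1 + (X:PS)^(k+1))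
      = Qp t * seriesProd (fun j => 1 + (X:PS)^(t+1+j)) := by
  ext N
  have hQ' : (∏ k ∈ Finset.range (t+(N+1)), (1+(X:PS)^(k+1)))
      = Qp t * ∏ j ∈ Finset.range (N+1), (1 + X^(t+1+j)) := by
    rw [Finset.prod_range_add, Qp]
    congr 1
    exact Finset.prod_congr rfl fun j _ => by rw [show t+j+1 = t+1+j from by omega]
  have hR : ∀ p ∈ Finset.HasAntidiagonal.antidiagonal N,
      coeff p.1 (Qp t) * coeff p.2 (∏ j ∈ Finset.range (N+1), (1 + X^(t+1+j)))
        = coeff p.1 (Qp t) * coeff p.2 (seriesProd (fun j => 1 + (X:PS)^(t+1+j))) := by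
    intro p hp
    have hp2 : p.2 ≤ N := by
      have := Finset.HasAntidiagonal.mem_antidiagonal.mp hp; omega
    rw [coeff_seriesProd _ (hg_shift t) (show p.2 < N+1 by omega)]
  calc coeff N (seriesProd fun k => 1 + (X:PS)^(k+1))
      = coeff N (∏ k ∈ Finset.range (N+1), (1+(X:PS)^(k+1))) :=
        coeff_seriesProd _ hg_base (by omega)
    _ = coeff N (∏ k ∈ Finset.range (t+(N+1)), (1+(X:PS)^(k+1))) :=
        (coeff_prod_stable _ hg_base N (t+(N+1)) (by omega)).symm
    _ = coeff N (Qp t * ∏ j ∈ Finset.range (N+1), (1 + X^(t+1+j))) := by rw [hQ']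
    _ = coeff N (Qp t * seriesProd (fun j => 1 + (X:PS)^(t+1+j))) := by
        rw [coeff_mul, coeff_mul]
        exact Finset.sum_congr rfl hR

/-! ### Interface lemmas -/

lemma mockF_eq_CC : mockF = CC 0 := by
  have h : ∀ n : ℕ,
      (X:PS) ^ (n ^ 2) * Ring.inverse (∏ j ∈ Finset.range n, (1 + X ^ (j + 1))) ^ 2
        = X ^ (n*n+0*n) * Ring.inverse (Qp n * Tq 0 n) := by
    intro n
    show (X:PS) ^ (n ^ 2) * Ring.inverse (Qp n) ^ 2 = X ^ (n*n+0*n) * Ring.inverse (Qp n * Tq 0 n)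
    rw [Tq_zero, Ring.mul_inverse_rev, show n*n+0*n = n^2 from by rw [Nat.pow_two]; omega]
    ring
  rw [mockF, CC]
  exact congrArg seriesSum (funext h)

lemma one_sub_FF :
    (1:PS) - FF 0 = seriesSum (fun m => (-1)^m * (X^(m+1) * Ring.inverse (Qp (m+1)))) := by
  ext N
  rw [map_sub, show FF 0 = seriesSum fun n => (-1)^n * (X ^ ((0+1)*n) * Ring.inverse (Qp n)) from rfl,
    coeff_seriesSum_ext _ (dvd_ff 0) (show N < N+2 by omega), Finset.sum_range_succ',
    coeff_seriesSum]
  have hf0 : ((-1:PS))^0 * (X^((0+1)*0) * Ring.inverse (Qp 0)) = 1 := by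
    simp [Qp, Ring.inverse_one]
  rw [hf0]
  have hterm : ∀ i ∈ Finset.range (N+1),
      coeff N ((-1)^(i+1) * (X^((0+1)*(i+1)) * Ring.inverse (Qp (i+1))))
        = - coeff N ((-1)^i * (X^(i+1) * Ring.inverse (Qp (i+1)))) := by
    intro i _
    rw [← map_neg]
    congr 1
    rw [show ((-1:PS))^(i+1) = -(-1:PS)^i from by rw [pow_succ]; ring,
      show (0+1)*(i+1) = i+1 from by omega]
    ring
  rw [Finset.sum_congr rfl hterm, Finset.sum_neg_distrib]
  ring

lemma P_mul : seriesProd (fun k => 1 + (X:PS)^(k+1)) * ((1:PS) - FF 0)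
    = seriesSum (fun m =>
        (-1 : PS) ^ (m + 1 - 1) * X ^ (m + 1)
          * seriesProd (fun j => 1 + X ^ (m + 1 + 1 + j))) := by
  rw [one_sub_FF, mul_seriesSum _ _ (fun m =>
    Dvd.dvd.mul_left (dvd_mul_of_dvd_left (pow_dvd_pow X (by omega)) _) _)]
  have h : ∀ m : ℕ,
      seriesProd (fun k => 1 + (X:PS)^(k+1)) * ((-1)^m * (X^(m+1) * Ring.inverse (Qp (m+1))))
        = (-1 : PS) ^ (m + 1 - 1) * X ^ (m + 1)
            * seriesProd (fun j => 1 + X ^ (m + 1 + 1 + j)) := by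
    intro m
    rw [show m+1-1 = m from by omega]
    have hsh := seriesProd_shift (m+1)
    have hcz : Qp (m+1) * Ring.inverse (Qp (m+1)) = 1 :=
      Ring.mul_inverse_cancel _ (isUnit_Qp _)
    linear_combination ((-1:PS)^m * (X^(m+1) * Ring.inverse (Qp (m+1)))) * hsh
      + ((-1:PS)^m * X^(m+1) * seriesProd (fun j => 1 + (X:PS)^(m+1+1+j))) * hcz
  exact congrArg seriesSum (funext h)

lemma isUnit_P : IsUnit (seriesProd (fun k => 1 + (X:PS)^(k+1))) := by
  refine isUnit_cc_one ?_
  rw [← coeff_zero_eq_constantCoeff_apply,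
    coeff_seriesProd _ hg_base (show 0 < 1 by omega), Finset.prod_range_one]
  simp

/-- Theorem 3.7 (Fine): `f(q) = 1 + (1/(-q;q)_∞) ∑_{n≥1} (-1)^{n-1} q^n (-q^{n+1};q)_∞`. -/
theorem stmt13 :
    mockF =
      1 + Ring.inverse (seriesProd (fun k => 1 + (X : PowerSeries ℚ) ^ (k + 1)))
        * seriesSum (fun m =>
            (-1 : PowerSeries ℚ) ^ (m + 1 - 1) * X ^ (m + 1)
              * seriesProd (fun j => 1 + X ^ (m + 1 + 1 + j))) := by
  have hPinv : Ring.inverse (seriesProd (fun k => 1 + (X:PS)^(k+1)))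
      * seriesProd (fun k => 1 + (X:PS)^(k+1)) = 1 :=
    Ring.inverse_mul_cancel _ isUnit_P
  rw [mockF_eq_CC]
  linear_combination key_main + Ring.inverse (seriesProd (fun k => 1 + (X:PS)^(k+1))) * P_mul
    - ((1:PS) - FF 0) * hPinv
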